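/- The ᾱ-Whitney-Lah numbers satisfy ∏_{i=0}^{n−1}(x + α_i + i·m) = Σ_{k=0}^n L_{m,ᾱ}(n,k) · ∏_{j=0}^{k−1}(x − α_j − j·m) as an identity of polynomials in x. -/

import Mathlib

open Polynomial Finset

theorem stmt13 (m : ℝ) (α : ℕ → ℝ)
    (w W L : ℕ → ℕ → ℝ)
    (hw : ∀ n : ℕ, ∏ j ∈ Finset.range n, (Polynomial.X - Polynomial.C (α j + j * m))
      = ∑ k ∈ Finset.range (n + 1), Polynomial.C (w n k) * Polynomial.X ^ k)
    (hW : ∀ n : ℕ, (Polynomial.X : Polynomial ℝ) ^ n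
      = ∑ k ∈ Finset.range (n + 1), Polynomial.C (W n k) * ∏ j ∈ Finset.range k, (Polynomial.X - Polynomial.C (α j + j * m)))
    (hL : ∀ n k : ℕ, k ≤ n →
      L n k = ∑ j ∈ Finset.Icc k n, (-1 : ℝ) ^ (n - j) * w n j * W j k)
    (hL0 : ∀ n k : ℕ, n < k → L n k = 0)
    (n : ℕ) :
    ∏ i ∈ Finset.range n, (Polynomial.X + Polynomial.C (α i + i * m))
      = ∑ k ∈ Finset.range (n + 1), Polynomial.C (L n k) *
          ∏ j ∈ Finset.range k, (Polynomial.X - Polynomial.C (α j + j * m)) := by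
  set P : ℕ → Polynomial ℝ := fun k => ∏ j ∈ Finset.range k, (X - C (α j + j * m)) with hP
  have key : ∏ i ∈ Finset.range n, (X + C (α i + i * m))
      = ∑ k ∈ Finset.range (n + 1), C ((-1 : ℝ) ^ (n - k) * w n k) * X ^ k := by
    have h := congrArg (fun p : Polynomial ℝ => p.comp (-X)) (hw n)
    simp only [Polynomial.prod_comp, Polynomial.sum_comp, sub_comp, X_comp, C_comp,
      mul_comp, pow_comp] at h
    have hl : ∏ j ∈ Finset.range n, (-X - C (α j + (j : ℝ) * m))
        = (-1 : Polynomial ℝ) ^ n * ∏ i ∈ Finset.range n, (X + C (α i + (i : ℝ) * m)) := by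
      rw [Finset.prod_congr rfl (fun j _ => show -X - C (α j + (j : ℝ) * m)
            = (-1) * (X + C (α j + (j : ℝ) * m)) by ring),
        Finset.prod_mul_distrib, Finset.prod_const, Finset.card_range]
    rw [hl] at h
    have hinv : ((-1 : Polynomial ℝ) ^ n) * ((-1 : Polynomial ℝ) ^ n) = 1 := by
      rw [← mul_pow]; norm_num
    calc ∏ i ∈ Finset.range n, (X + C (α i + i * m))
        = (-1 : Polynomial ℝ) ^ n * ((-1 : Polynomial ℝ) ^ n
            * ∏ i ∈ Finset.range n, (X + C (α i + (i : ℝ) * m))) := by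
          rw [← mul_assoc, hinv, one_mul]
      _ = (-1 : Polynomial ℝ) ^ n * ∑ k ∈ Finset.range (n + 1), C (w n k) * (-X) ^ k := by
          rw [h]
      _ = ∑ k ∈ Finset.range (n + 1), C ((-1 : ℝ) ^ (n - k) * w n k) * X ^ k := by
          rw [Finset.mul_sum]
          refine Finset.sum_congr rfl (fun k hk => ?_)
          have hkn : k ≤ n := Nat.lt_succ_iff.1 (Finset.mem_range.1 hk)
          have h2 : ((-1 : Polynomial ℝ) ^ k) * ((-1 : Polynomial ℝ) ^ k) = 1 := by
            rw [← mul_pow]; norm_num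
          calc (-1 : Polynomial ℝ) ^ n * (C (w n k) * (-X) ^ k)
              = ((-1 : Polynomial ℝ) ^ (n - k) * (-1) ^ k) * (C (w n k) * (-X) ^ k) := by
                rw [← pow_add, Nat.sub_add_cancel hkn]
            _ = (-1 : Polynomial ℝ) ^ (n - k) * (((-1) ^ k * (-1) ^ k) * C (w n k) * X ^ k) := by
                rw [neg_pow (X : Polynomial ℝ) k]; ring
            _ = (-1 : Polynomial ℝ) ^ (n - k) * C (w n k) * X ^ k := by
                rw [h2]; ring
            _ = C ((-1 : ℝ) ^ (n - k) * w n k) * X ^ k := by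
                rw [map_mul, map_pow, map_neg, map_one]
  rw [key]
  have expand : ∀ k, (X : Polynomial ℝ) ^ k = ∑ j ∈ Finset.range (k + 1), C (W k j) * P j :=
    fun k => hW k
  calc ∑ k ∈ Finset.range (n + 1), C ((-1 : ℝ) ^ (n - k) * w n k) * X ^ k
      = ∑ k ∈ Finset.range (n + 1), ∑ j ∈ Finset.range (k + 1),
          C ((-1 : ℝ) ^ (n - k) * w n k * W k j) * P j := by
        refine Finset.sum_congr rfl (fun k _ => ?_)
        rw [expand k, Finset.mul_sum]
        refine Finset.sum_congr rfl (fun j _ => ?_)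
        simp only [map_mul]; ring
    _ = ∑ j ∈ Finset.range (n + 1), ∑ k ∈ Finset.Icc j n,
          C ((-1 : ℝ) ^ (n - k) * w n k * W k j) * P j := by
        rw [Finset.sum_sigma', Finset.sum_sigma']
        refine Finset.sum_nbij' (fun p => ⟨p.2, p.1⟩) (fun p => ⟨p.2, p.1⟩) ?_ ?_ ?_ ?_ ?_
        · rintro ⟨k, j⟩ hp
          simp only [Finset.mem_sigma, Finset.mem_range, Finset.mem_Icc,
            Nat.lt_succ_iff] at hp ⊢
          omega
        · rintro ⟨j, k⟩ hp
          simp only [Finset.mem_sigma, Finset.mem_range, Finset.mem_Icc,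
            Nat.lt_succ_iff] at hp ⊢
          omega
        · rintro ⟨k, j⟩ _; rfl
        · rintro ⟨j, k⟩ _; rfl
        · rintro ⟨k, j⟩ _; rfl
    _ = ∑ k ∈ Finset.range (n + 1), C (L n k) * P k := by
        refine Finset.sum_congr rfl (fun j hj => ?_)
        have hjn : j ≤ n := Nat.lt_succ_iff.1 (Finset.mem_range.1 hj)
        rw [hL n j hjn, ← Finset.sum_mul, ← map_sum]
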